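/- If r-1 divides k-1, then the r-uniform Ramsey number R(K_k^{(r)}, T) equals (k-1)t + 1 for every r-uniform hypertree T with t edges. -/

import Mathlib

open Finset

structure FinHypergraph (V : Type*) where
  edges : Finset (Finset V)

namespace FinHypergraph

variable {V : Type*} [DecidableEq V]

/-- `H` is `r`-uniform: every edge has exactly `r` vertices. -/
def Uniform (H : FinHypergraph V) (r : ℕ) : Prop := ∀ e ∈ H.edges, e.card = r

/-- Two vertices are adjacent if some edge contains both. -/
def adj (H : FinHypergraph V) (u w : V) : Prop := ∃ e ∈ H.edges, u ∈ e ∧ w ∈ e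

/-- `H` is connected: any two vertices are joined by a walk. -/
def Connected (H : FinHypergraph V) : Prop := ∀ u w : V, Relation.ReflTransGen H.adj u w

/-- No two distinct edges intersect in more than one vertex. -/
def Linear (H : FinHypergraph V) : Prop :=
  ∀ e ∈ H.edges, ∀ f ∈ H.edges, e ≠ f → (e ∩ f).card ≤ 1

/-- A Berge cycle: distinct vertices `v 0, …, v (k-1)` and distinct edges
`e 0, …, e (k-1)`, `k ≥ 2`, with `{v i, v (i+1)} ⊆ e i` cyclically. -/
def HasBergeCycle (H : FinHypergraph V) : Prop :=
  ∃ k : ℕ, ∃ _ : 2 ≤ k, ∃ (v : Fin k → V) (e : Fin k → Finset V),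
    Function.Injective v ∧ Function.Injective e ∧
    (∀ i, e i ∈ H.edges) ∧
    (∀ i : Fin k, v i ∈ e i ∧ v ⟨(i.val + 1) % k, Nat.mod_lt _ (by omega)⟩ ∈ e i)

/-- A hypertree: connected, linear, with no Berge cycle. -/
def IsHypertree (H : FinHypergraph V) : Prop :=
  H.Connected ∧ H.Linear ∧ ¬ H.HasBergeCycle

/-- A proper coloring: no edge is monochromatic. -/
def Proper (H : FinHypergraph V) {k : ℕ} (c : V → Fin k) : Prop :=
  ∀ e ∈ H.edges, ¬ ∀ u ∈ e, ∀ w ∈ e, c u = c w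

/-- The chromatic number: least number of colors in a proper coloring. -/
noncomputable def chromaticNumber (H : FinHypergraph V) : ℕ :=
  sInf {k | ∃ c : V → Fin k, H.Proper c}

/-- `H` contains a copy of `T`: an injective vertex map sending edges to edges. -/
def ContainsCopy {W : Type*} [DecidableEq W] (H : FinHypergraph V) (T : FinHypergraph W) : Prop :=
  ∃ φ : W → V, Function.Injective φ ∧ ∀ e ∈ T.edges, e.image φ ∈ H.edges

end FinHypergraph

/-- The complete `r`-uniform hypergraph on `Fin n`. -/
def completeHypergraph (n r : ℕ) : FinHypergraph (Fin n) :=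
  ⟨Finset.univ.powersetCard r⟩

namespace RamseyAux

variable {W : Type*} [DecidableEq W]

def lsup (L : List (Finset W)) : Finset W := L.foldr (· ∪ ·) ∅

@[simp] lemma lsup_nil : lsup ([] : List (Finset W)) = ∅ := rfl
@[simp] lemma lsup_cons (e : Finset W) (L : List (Finset W)) :
    lsup (e :: L) = e ∪ lsup L := rfl

lemma mem_lsup_iff {L : List (Finset W)} {z : W} :
    z ∈ lsup L ↔ ∃ f ∈ L, z ∈ f := by
  induction L with
  | nil => simp
  | cons e L ih => simp [lsup_cons, ih, Finset.mem_union, or_and_right, exists_or]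

inductive Grows : List (Finset W) → Prop
  | nil : Grows []
  | cons (e : Finset W) (L : List (Finset W)) (hL : Grows L)
      (hc : L = [] ∨ (e ∩ lsup L).card = 1) (he : e ∉ L) : Grows (e :: L)

lemma subset_lsup {L : List (Finset W)} {f : Finset W} (hf : f ∈ L) : f ⊆ lsup L := by
  induction L with
  | nil => simp at hf
  | cons e L ih =>
    rcases List.mem_cons.mp hf with h | h
    · subst h; simp [lsup_cons, Finset.subset_union_left]
    · exact (ih h).trans Finset.subset_union_right


lemma Grows.nodup {L : List (Finset W)} (h : Grows L) : L.Nodup := by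
  induction h with
  | nil => exact List.nodup_nil
  | cons e L hL hc he ih => exact List.nodup_cons.mpr ⟨he, ih⟩


lemma grows_card {r : ℕ} (hr : 1 ≤ r) {L : List (Finset W)} (h : Grows L)
    (hu : ∀ f ∈ L, f.card = r) (hne : L ≠ []) :
    (lsup L).card = (r - 1) * L.length + 1 := by
  induction h with
  | nil => simp at hne
  | cons e L hL hc he ih =>
    rcases hc with h0 | h1
    · subst h0
      have : e.card = r := hu e (by simp)
      simp [lsup_cons, this]
      omega
    · have hLne : L ≠ [] := by
        intro h; subst h; simp at h1
      have hcard := ih (fun f hf => hu f (List.mem_cons_of_mem _ hf)) hLne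
      have he' : e.card = r := hu e (by simp)
      have hunion := Finset.card_union_add_card_inter e (lsup L)
      have : (e ∪ lsup L).card = r + ((r-1) * L.length + 1) - 1 := by omega
      simp only [lsup_cons, List.length_cons]
      rw [this]
      have : 1 ≤ r := hr
      ring_nf
      omega


/-- path of length m from a to b using edges of L -/
def IsPath (L : List (Finset W)) (a b : W) (m : ℕ)
    (v : Fin (m+1) → W) (g : Fin m → Finset W) : Prop :=
  Function.Injective v ∧ Function.Injective g ∧ (∀ i, g i ∈ L) ∧
  (∀ i : Fin m, v i.castSucc ∈ g i ∧ v i.succ ∈ g i) ∧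
  v 0 = a ∧ v (Fin.last m) = b ∧ (∀ i, v i ∈ lsup L)

lemma path_single {L : List (Finset W)} {e : Finset W} (heL : e ∈ L) {a b : W}
    (ha : a ∈ e) (hb : b ∈ e) (hab : a ≠ b) :
    ∃ m, 1 ≤ m ∧ ∃ v g, IsPath L a b m v g := by
  refine ⟨1, le_refl _, ![a, b], ![e], ?_, ?_, ?_, ?_, rfl, rfl, ?_⟩
  · intro i j hij
    fin_cases i <;> fin_cases j <;> simp_all <;> exact absurd hij.symm hab
  · intro i j _; exact Subsingleton.elim i j
  · intro i; fin_cases i; simpa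
  · intro i; fin_cases i
    exact ⟨ha, hb⟩
  · intro i
    have hs : e ⊆ lsup L := by
      intro z hz; exact mem_lsup_iff.mpr ⟨e, heL, hz⟩
    fin_cases i
    · exact hs ha
    · exact hs hb

lemma path_cons_front {L : List (Finset W)} {e : Finset W} {a c b : W} {m : ℕ}
    {v : Fin (m+1) → W} {g : Fin m → Finset W}
    (hp : IsPath L c b m v g) (ha : a ∈ e) (hc : c ∈ e) (hanotin : a ∉ lsup L)
    (heL : e ∉ L) :
    ∃ v' g', IsPath (e :: L) a b (m+1) v' g' := by
  obtain ⟨hvinj, hginj, hgL, hinc, hv0, hvl, hvmem⟩ := hp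
  refine ⟨Fin.cons a v, Fin.cons e g, ?_, ?_, ?_, ?_, ?_, ?_, ?_⟩
  · intro i j hij
    rcases Fin.eq_zero_or_eq_succ i with hi | ⟨i', hi⟩ <;>
      rcases Fin.eq_zero_or_eq_succ j with hj | ⟨j', hj⟩ <;> subst hi <;> subst hj <;>
      simp only [Fin.cons_zero, Fin.cons_succ] at hij
    · rfl
    · exact absurd (hij ▸ hvmem j') hanotin
    · exact absurd (hij ▸ hvmem i') hanotin
    · exact congrArg _ (hvinj hij)
  · intro i j hij
    rcases Fin.eq_zero_or_eq_succ i with hi | ⟨i', hi⟩ <;>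
      rcases Fin.eq_zero_or_eq_succ j with hj | ⟨j', hj⟩ <;> subst hi <;> subst hj <;>
      simp only [Fin.cons_zero, Fin.cons_succ] at hij
    · rfl
    · exact absurd (hij ▸ hgL j') heL
    · exact absurd (hij.symm ▸ hgL i') heL
    · exact congrArg _ (hginj hij)
  · intro i
    rcases Fin.eq_zero_or_eq_succ i with hi | ⟨i', hi⟩ <;> subst hi
    · simp
    · simp only [Fin.cons_succ]
      exact List.mem_cons_of_mem _ (hgL i')
  · intro i
    rcases Fin.eq_zero_or_eq_succ i with hi | ⟨i', hi⟩ <;> subst hi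
    · constructor
      · simpa using ha
      · have h2 : (Fin.cons a v : Fin (m+2) → W) ((0:Fin (m+1)).succ) = v 0 :=
          Fin.cons_succ _ _ _
        simpa [h2, hv0] using hc
    · have h1 : (i'.succ).castSucc = (i'.castSucc).succ := by
        exact Fin.ext (by simp)
      constructor
      · rw [h1]
        simpa [Fin.cons_succ] using (hinc i').1
      · rw [show (i'.succ).succ = (i'.succ).succ from rfl]
        simpa [Fin.cons_succ] using (hinc i').2
  · simp
  · rw [show Fin.last (m+1) = (Fin.last m).succ from rfl]
    simpa using hvl
  · intro i
    rcases Fin.eq_zero_or_eq_succ i with hi | ⟨i', hi⟩ <;> subst hi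
    · simp [lsup_cons, ha]
    · simp only [Fin.cons_succ, lsup_cons, Finset.mem_union]
      exact Or.inr (hvmem i')

end RamseyAux

namespace RamseyAux
variable {W : Type*} [DecidableEq W]

lemma path_snoc_back {L : List (Finset W)} {e : Finset W} {a c b : W} {m : ℕ}
    {v : Fin (m+1) → W} {g : Fin m → Finset W}
    (hp : IsPath L a c m v g) (hb : b ∈ e) (hc : c ∈ e) (hbnotin : b ∉ lsup L)
    (heL : e ∉ L) :
    ∃ v' g', IsPath (e :: L) a b (m+1) v' g' := by
  obtain ⟨hvinj, hginj, hgL, hinc, hv0, hvl, hvmem⟩ := hp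
  refine ⟨Fin.snoc v b, Fin.snoc g e, ?_, ?_, ?_, ?_, ?_, ?_, ?_⟩
  · intro i j hij
    rcases Fin.eq_castSucc_or_eq_last i with ⟨i', hi⟩ | hi <;>
      rcases Fin.eq_castSucc_or_eq_last j with ⟨j', hj⟩ | hj <;> subst hi <;> subst hj <;>
      simp only [Fin.snoc_castSucc, Fin.snoc_last] at hij
    · exact congrArg _ (hvinj hij)
    · exact absurd (hij ▸ hvmem i') hbnotin
    · exact absurd (hij.symm ▸ hvmem j') hbnotin
    · rfl
  · intro i j hij
    rcases Fin.eq_castSucc_or_eq_last i with ⟨i', hi⟩ | hi <;>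
      rcases Fin.eq_castSucc_or_eq_last j with ⟨j', hj⟩ | hj <;> subst hi <;> subst hj <;>
      simp only [Fin.snoc_castSucc, Fin.snoc_last] at hij
    · exact congrArg _ (hginj hij)
    · exact absurd (hij ▸ hgL i') heL
    · exact absurd (hij.symm ▸ hgL j') heL
    · rfl
  · intro i
    rcases Fin.eq_castSucc_or_eq_last i with ⟨i', hi⟩ | hi <;> subst hi
    · simp only [Fin.snoc_castSucc]
      exact List.mem_cons_of_mem _ (hgL i')
    · simp
  · intro i
    rcases Fin.eq_castSucc_or_eq_last i with ⟨i', hi⟩ | hi <;> subst hi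
    · have h1 : (i'.castSucc).castSucc = ((i'.castSucc : Fin (m+1)).castSucc : Fin (m+2)) := rfl
      have h2 : (i'.castSucc).succ = ((i'.succ : Fin (m+1)).castSucc : Fin (m+2)) :=
        (Fin.succ_castSucc i').symm ▸ rfl
      constructor
      · simpa [Fin.snoc_castSucc] using (hinc i').1
      · rw [show ((i'.castSucc : Fin (m+1)).succ) = ((i'.succ).castSucc : Fin (m+2)) from
          Fin.succ_castSucc i']
        simpa only [Fin.snoc_castSucc] using (hinc i').2
    · constructor
      · have h3 : ((Fin.last m).castSucc : Fin (m+2)) = (Fin.last m).castSucc := rfl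
        simp only [Fin.snoc_last, Fin.snoc_castSucc]
        simpa [Fin.snoc_castSucc, hvl] using hc
      · have h4 : ((Fin.last m : Fin (m+1)).succ : Fin (m+2)) = Fin.last (m+1) := rfl
        rw [h4]
        simpa using hb
  · have h0 : ((0 : Fin (m+2))) = ((0 : Fin (m+1)).castSucc) := rfl
    rw [h0, Fin.snoc_castSucc]
    exact hv0
  · simp
  · intro i
    rcases Fin.eq_castSucc_or_eq_last i with ⟨i', hi⟩ | hi <;> subst hi
    · simp only [Fin.snoc_castSucc, lsup_cons, Finset.mem_union]
      exact Or.inr (hvmem i')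
    · simp [lsup_cons, hb]

end RamseyAux

namespace RamseyAux
variable {W : Type*} [DecidableEq W]

lemma path_lift {L : List (Finset W)} {e : Finset W} {a b : W} {m : ℕ}
    {v : Fin (m+1) → W} {g : Fin m → Finset W} (hp : IsPath L a b m v g) :
    IsPath (e :: L) a b m v g := by
  obtain ⟨hvinj, hginj, hgL, hinc, hv0, hvl, hvmem⟩ := hp
  refine ⟨hvinj, hginj, fun i => List.mem_cons_of_mem _ (hgL i), hinc, hv0, hvl, fun i => ?_⟩
  simp only [lsup_cons, Finset.mem_union]
  exact Or.inr (hvmem i)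

lemma exists_path {L : List (Finset W)} (hG : Grows L) :
    ∀ a b : W, a ∈ lsup L → b ∈ lsup L → a ≠ b →
    ∃ m, 1 ≤ m ∧ ∃ v g, IsPath L a b m v g := by
  induction hG with
  | nil => intro a b ha; simp at ha
  | cons e L hL hc he ih =>
    intro a b ha hb hab
    by_cases haL : a ∈ lsup L <;> by_cases hbL : b ∈ lsup L
    · obtain ⟨m, hm, v, g, hp⟩ := ih a b haL hbL hab
      exact ⟨m, hm, v, g, path_lift hp⟩
    · -- b ∈ e, b ∉ lsup L
      have hbe : b ∈ e := by
        rcases Finset.mem_union.mp hb with h | h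
        · exact h
        · exact absurd h hbL
      have hLne : L ≠ [] := by rintro rfl; simp at haL
      rcases hc with h0 | h1; · exact absurd h0 hLne
      obtain ⟨w, hw⟩ := Finset.card_eq_one.mp h1
      have hwe : w ∈ e := (Finset.mem_inter.mp (hw ▸ Finset.mem_singleton_self w)).1
      have hwL : w ∈ lsup L := (Finset.mem_inter.mp (hw ▸ Finset.mem_singleton_self w)).2
      by_cases haw : a = w
      · subst haw
        obtain ⟨m, _, v, g, hp⟩ := path_single (List.mem_cons_self (a := e) (l := L)) hwe hbe hab
        exact ⟨m, by omega, v, g, hp⟩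
      · obtain ⟨m, hm, v, g, hp⟩ := ih a w haL hwL haw
        obtain ⟨v', g', hp'⟩ := path_snoc_back hp hbe hwe hbL he
        exact ⟨m+1, by omega, v', g', hp'⟩
    · -- a ∈ e \ lsup L
      have hae : a ∈ e := by
        rcases Finset.mem_union.mp ha with h | h
        · exact h
        · exact absurd h haL
      have hLne : L ≠ [] := by rintro rfl; simp at hbL
      rcases hc with h0 | h1; · exact absurd h0 hLne
      obtain ⟨w, hw⟩ := Finset.card_eq_one.mp h1
      have hwe : w ∈ e := (Finset.mem_inter.mp (hw ▸ Finset.mem_singleton_self w)).1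
      have hwL : w ∈ lsup L := (Finset.mem_inter.mp (hw ▸ Finset.mem_singleton_self w)).2
      by_cases hbw : b = w
      · subst hbw
        obtain ⟨m, _, v, g, hp⟩ := path_single (List.mem_cons_self (a := e) (l := L)) hae hwe hab
        exact ⟨m, by omega, v, g, hp⟩
      · obtain ⟨m, hm, v, g, hp⟩ := ih w b hwL hbL (fun h => hbw h.symm)
        obtain ⟨v', g', hp'⟩ := path_cons_front hp hae hwe haL he
        exact ⟨m+1, by omega, v', g', hp'⟩
    · -- both in e only
      have hae : a ∈ e := by
        rcases Finset.mem_union.mp ha with h | h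
        · exact h
        · exact absurd h haL
      have hbe : b ∈ e := by
        rcases Finset.mem_union.mp hb with h | h
        · exact h
        · exact absurd h hbL
      exact path_single (List.mem_cons_self (a := e) (l := L)) hae hbe hab

end RamseyAux

namespace RamseyAux
variable {W : Type*} [DecidableEq W]

lemma berge_of_two (T : FinHypergraph W) {L : List (Finset W)} (hG : Grows L)
    (hLT : ∀ f ∈ L, f ∈ T.edges) {f : Finset W} (hfT : f ∈ T.edges) (hfL : f ∉ L)
    {a b : W} (ha : a ∈ f ∩ lsup L) (hb : b ∈ f ∩ lsup L) (hab : a ≠ b) :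
    T.HasBergeCycle := by
  obtain ⟨haf, haL⟩ := Finset.mem_inter.mp ha
  obtain ⟨hbf, hbL⟩ := Finset.mem_inter.mp hb
  obtain ⟨m, hm, v, g, hvinj, hginj, hgL, hinc, hv0, hvl, hvmem⟩ :=
    exists_path hG a b haL hbL hab
  refine ⟨m+1, by omega, v, Fin.snoc g f, hvinj, ?_, ?_, ?_⟩
  · intro i j hij
    rcases Fin.eq_castSucc_or_eq_last i with ⟨i', hi⟩ | hi <;>
      rcases Fin.eq_castSucc_or_eq_last j with ⟨j', hj⟩ | hj <;> subst hi <;> subst hj <;>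
      simp only [Fin.snoc_castSucc, Fin.snoc_last] at hij
    · exact congrArg _ (hginj hij)
    · exact absurd (hij ▸ hfL) (fun h => h (hgL i'))
    · exact absurd (hij ▸ hgL j') hfL
    · rfl
  · intro i
    rcases Fin.eq_castSucc_or_eq_last i with ⟨i', hi⟩ | hi <;> subst hi
    · simp only [Fin.snoc_castSucc]; exact hLT _ (hgL i')
    · simpa using hfT
  · intro i
    rcases Fin.eq_castSucc_or_eq_last i with ⟨i', hi⟩ | hi <;> subst hi
    · constructor
      · simpa [Fin.snoc_castSucc] using (hinc i').1
      · have hlt : i'.val + 1 < m + 1 := by omega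
        have hidx : (⟨(i'.castSucc.val + 1) % (m+1), Nat.mod_lt _ (by omega)⟩ : Fin (m+1))
            = i'.succ := by
          apply Fin.ext
          simp [Fin.val_succ, Nat.mod_eq_of_lt hlt]
        rw [hidx]
        simpa [Fin.snoc_castSucc] using (hinc i').2
    · constructor
      · simpa [Fin.snoc_last, hvl] using hbf
      · have hidx : (⟨((Fin.last m).val + 1) % (m+1), Nat.mod_lt _ (by omega)⟩ : Fin (m+1))
            = 0 := by
          apply Fin.ext
          simp
        rw [hidx]
        simpa [Fin.snoc_last, hv0] using haf

end RamseyAux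

namespace RamseyAux
variable {W : Type*} [DecidableEq W]

lemma cross (T : FinHypergraph W) {S : Finset W} {a b : W}
    (h : Relation.ReflTransGen T.adj a b) (hb : b ∉ S) :
    a ∈ S → ∃ u v, u ∈ S ∧ v ∉ S ∧ T.adj u v := by
  induction h using Relation.ReflTransGen.head_induction_on with
  | refl => exact fun ha => absurd ha hb
  | head hadj _ ih =>
    rename_i x c _
    intro hx
    by_cases hc : c ∈ S
    · exact ih hc
    · exact ⟨x, c, hx, hc, hadj⟩

lemma cover (T : FinHypergraph W) {r : ℕ} (hr : 2 ≤ r) (hconn : T.Connected)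
    (hu : T.Uniform r) (hne : T.edges.Nonempty) (z : W) : ∃ e ∈ T.edges, z ∈ e := by
  obtain ⟨e₀, he₀⟩ := hne
  have hcard : 1 < e₀.card := by rw [hu e₀ he₀]; omega
  obtain ⟨x, hx, y, hy, hxy⟩ := Finset.one_lt_card.mp hcard
  obtain ⟨v, hv, hvz⟩ : ∃ v ∈ e₀, v ≠ z := by
    by_cases hxz : x = z
    · exact ⟨y, hy, fun h => hxy (hxz ▸ h ▸ rfl)⟩
    · exact ⟨x, hx, hxz⟩
  rcases (Relation.ReflTransGen.cases_head (hconn z v)) with h | ⟨c, hadj, _⟩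
  · exact absurd h.symm hvz
  · obtain ⟨e, he, hze, _⟩ := hadj
    exact ⟨e, he, hze⟩

lemma exists_grows (T : FinHypergraph W) (hT : T.IsHypertree) {r : ℕ} (hr : 2 ≤ r)
    (hu : T.Uniform r) :
    ∃ L : List (Finset W), Grows L ∧ L.toFinset = T.edges := by
  obtain ⟨hconn, hlin, hnoberge⟩ := hT
  suffices h : ∀ n (L : List (Finset W)), Grows L → (∀ f ∈ L, f ∈ T.edges) →
      (T.edges \ L.toFinset).card = n → ∃ L', Grows L' ∧ L'.toFinset = T.edges by
    exact h (T.edges \ ([] : List (Finset W)).toFinset).card [] Grows.nil (by simp) rfl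
  intro n
  induction n with
  | zero =>
    intro L hG hLT hcard
    refine ⟨L, hG, ?_⟩
    apply Finset.Subset.antisymm
    · intro f hf; exact hLT f (List.mem_toFinset.mp hf)
    · intro f hf
      by_contra hfL
      have : f ∈ T.edges \ L.toFinset := Finset.mem_sdiff.mpr ⟨hf, hfL⟩
      rw [Finset.card_eq_zero.mp hcard] at this
      simp at this
  | succ n ih =>
    intro L hG hLT hcard
    have hRne : (T.edges \ L.toFinset).Nonempty := by
      rw [← Finset.card_pos, hcard]; omega
    cases L with
    | nil =>
      obtain ⟨f, hf⟩ := hRne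
      have hfT : f ∈ T.edges := (Finset.mem_sdiff.mp hf).1
      refine ih [f] (Grows.cons f [] Grows.nil (Or.inl rfl) (by simp)) ?_ ?_
      · intro g hg; simp at hg; subst hg; exact hfT
      · have h1 : T.edges \ ([f] : List (Finset W)).toFinset
            = (T.edges \ ([] : List (Finset W)).toFinset).erase f := by
          simp [Finset.sdiff_singleton_eq_erase]
        rw [h1, Finset.card_erase_of_mem hf, hcard]; omega
    | cons e₀ L₀ =>
      have ha : ∃ a, a ∈ lsup (e₀ :: L₀) := by
        have he₀T : e₀ ∈ T.edges := hLT e₀ (by simp)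
        have : 0 < e₀.card := by rw [hu e₀ he₀T]; omega
        obtain ⟨a, haa⟩ := Finset.card_pos.mp this
        exact ⟨a, by simp only [lsup_cons, Finset.mem_union]; left; exact haa⟩
      obtain ⟨a, haL⟩ := ha
      obtain ⟨g, hg⟩ := hRne
      have hgT : g ∈ T.edges := (Finset.mem_sdiff.mp hg).1
      have hgb : ∃ b, b ∈ g := by
        apply Finset.card_pos.mp; rw [hu g hgT]; omega
      obtain ⟨b, hbg⟩ := hgb
      have hstep : ∃ f ∈ T.edges \ (e₀ :: L₀).toFinset, (f ∩ lsup (e₀ :: L₀)).Nonempty := by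
        by_cases hbL : b ∈ lsup (e₀ :: L₀)
        · exact ⟨g, hg, ⟨b, Finset.mem_inter.mpr ⟨hbg, hbL⟩⟩⟩
        · obtain ⟨u, v, hu', hv', huv⟩ := cross T (hconn a b) hbL haL
          obtain ⟨h, hhT, huh, hvh⟩ := huv
          have hhL : h ∉ (e₀ :: L₀).toFinset := by
            intro hmem
            exact hv' (subset_lsup (List.mem_toFinset.mp hmem) hvh)
          exact ⟨h, Finset.mem_sdiff.mpr ⟨hhT, hhL⟩, ⟨u, Finset.mem_inter.mpr ⟨huh, hu'⟩⟩⟩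
      obtain ⟨f, hfR, hfint⟩ := hstep
      have hfT : f ∈ T.edges := (Finset.mem_sdiff.mp hfR).1
      have hfL : f ∉ (e₀ :: L₀) := fun h =>
        (Finset.mem_sdiff.mp hfR).2 (List.mem_toFinset.mpr h)
      have hcard1 : (f ∩ lsup (e₀ :: L₀)).card = 1 := by
        rcases Nat.lt_or_ge (f ∩ lsup (e₀ :: L₀)).card 2 with h2 | h2
        · have h1 : 1 ≤ (f ∩ lsup (e₀ :: L₀)).card := Finset.card_pos.mpr hfint
          omega
        · exfalso
          obtain ⟨x, hx, y, hy, hxy⟩ := Finset.one_lt_card.mp h2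
          exact hnoberge (berge_of_two T hG (fun q hq => hLT q hq) hfT hfL hx hy hxy)
      refine ih (f :: e₀ :: L₀) (Grows.cons f _ hG (Or.inr hcard1) hfL) ?_ ?_
      · intro q hq
        rcases List.mem_cons.mp hq with h | h
        · subst h; exact hfT
        · exact hLT q h
      · have h2 : T.edges \ (f :: e₀ :: L₀).toFinset
            = (T.edges \ (e₀ :: L₀).toFinset).erase f := by
          ext x
          simp only [List.toFinset_cons, Finset.mem_sdiff, Finset.mem_erase,
            Finset.mem_insert]
          tauto
        rw [h2, Finset.card_erase_of_mem hfR, hcard]; omega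

end RamseyAux

namespace RamseyAux
open Finset
variable {W : Type*} [DecidableEq W]

lemma upper (k r : ℕ) (hk : 2 ≤ k) (hr : 2 ≤ r) {N : ℕ}
    (col : Finset (Fin N) → Bool) :
    ∀ (L : List (Finset W)), Grows L → (∀ f ∈ L, f.card = r) →
    ∀ A : Finset (Fin N), (k-1) * L.length + 1 ≤ A.card →
    (∃ S : Finset (Fin N), S ⊆ A ∧ S.card = k ∧ ∀ c ⊆ S, c.card = r → col c = true) ∨
    (∃ φ : W → Fin N, Set.InjOn φ ↑(lsup L) ∧ (∀ z ∈ lsup L, φ z ∈ A) ∧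
      ∀ f ∈ L, col (f.image φ) = false) := by
  intro L
  induction L with
  | nil =>
    intro _ _ A hA
    have h1 : 1 ≤ A.card := le_trans (Nat.le_add_left 1 _) hA
    obtain ⟨a₀, ha₀⟩ := Finset.card_pos.mp h1
    right
    exact ⟨fun _ => a₀, by simp [lsup_nil], by simp [lsup_nil], by simp⟩
  | cons e L' IH =>
    intro hG hcards A hA
    have hGe := hG
    obtain ⟨-, -, hGL', hc, heL'⟩ :
        True ∧ True ∧ Grows L' ∧ (L' = [] ∨ (e ∩ lsup L').card = 1) ∧ e ∉ L' := by
      cases hG with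
      | cons _ _ hL hc he => exact ⟨trivial, trivial, hL, hc, he⟩
    have hAne : A.Nonempty := by rw [← Finset.card_pos]; omega
    obtain ⟨a₀, ha₀⟩ := hAne
    have hecard : e.card = r := hcards e (by simp)
    rcases hc with rfl | hc
    · -- base case : single edge
      have hAk : k ≤ A.card := by have h := hA; simp at h; omega
      obtain ⟨A', hA'sub, hA'card⟩ := Finset.exists_subset_card_eq hAk
      by_cases hall : ∀ c ⊆ A', c.card = r → col c = true
      · exact Or.inl ⟨A', hA'sub, hA'card, hall⟩
      · push_neg at hall
        obtain ⟨c, hcA', hcr, hcblue⟩ := hall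
        have hcblue : col c = false := by revert hcblue; cases col c <;> simp
        have hec : e.card = c.card := by rw [hecard, hcr]
        let η := Finset.equivOfCardEq hec
        refine Or.inr ⟨fun z => if h : z ∈ e then (η ⟨z, h⟩ : Fin N) else a₀, ?_, ?_, ?_⟩
        · intro z₁ hz₁ z₂ hz₂ h12
          simp only [lsup_cons, lsup_nil, Finset.union_empty, Finset.coe_union,
            Finset.mem_coe] at hz₁ hz₂
          have hz₁' : z₁ ∈ e := by simpa using hz₁
          have hz₂' : z₂ ∈ e := by simpa using hz₂
          beta_reduce at h12
          rw [dif_pos hz₁', dif_pos hz₂'] at h12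
          have := η.injective (Subtype.ext h12)
          exact congrArg Subtype.val this
        · intro z hz
          have hz' : z ∈ e := by simpa using hz
          beta_reduce
          rw [dif_pos hz']
          exact hA'sub (hcA' (η ⟨z, hz'⟩).2)
        · intro f hf
          have hfe : f = e := by simpa using hf
          subst hfe
          have himg : f.image (fun z => if h : z ∈ f then (η ⟨z, h⟩ : Fin N) else a₀) = c := by
            apply Finset.eq_of_subset_of_card_le
            · intro y hy
              simp only [Finset.mem_image] at hy
              obtain ⟨z, hz, hzy⟩ := hy
              beta_reduce at hzy
              rw [dif_pos hz] at hzy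
              exact hzy ▸ (η ⟨z, hz⟩).2
            · rw [Finset.card_image_of_injOn, hec]
              intro z₁ hz₁ z₂ hz₂ h12
              have hz₁' : z₁ ∈ f := hz₁
              have hz₂' : z₂ ∈ f := hz₂
              beta_reduce at h12
              rw [dif_pos hz₁', dif_pos hz₂'] at h12
              exact congrArg Subtype.val (η.injective (Subtype.ext h12))
          rw [himg, hcblue]
    · -- main step
      have hL'ne : L' ≠ [] := by
        rintro rfl; simp at hc
      obtain ⟨w, hw⟩ := Finset.card_eq_one.mp hc
      have hwe : w ∈ e := (Finset.mem_inter.mp (hw ▸ Finset.mem_singleton_self w)).1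
      have hwL' : w ∈ lsup L' := (Finset.mem_inter.mp (hw ▸ Finset.mem_singleton_self w)).2
      set t' := L'.length with ht'
      have hmul : (k-1) * (t' + 1) = (k-1) * t' + (k-1) := by ring
      -- abbreviate the final goal
      set G := (∃ S : Finset (Fin N), S ⊆ A ∧ S.card = k ∧
            ∀ c ⊆ S, c.card = r → col c = true) ∨
          (∃ φ : W → Fin N, Set.InjOn φ ↑(lsup (e :: L')) ∧
            (∀ z ∈ lsup (e :: L'), φ z ∈ A) ∧
            ∀ f ∈ (e :: L'), col (f.image φ) = false) with hGdef
      have build : ∀ j, j ≤ k → G ∨ ∃ (x : Fin j → Fin N) (U : Fin j → Finset (Fin N)),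
          (∀ i, x i ∈ U i) ∧ (∀ i, U i ⊆ A) ∧
          (∀ i₁ i₂ : Fin j, i₁ < i₂ → x i₁ ∉ U i₂) ∧
          (∀ i, ∀ B ⊆ A \ U i, B.card = r - 1 → col (insert (x i) B) = true) := by
        intro j
        induction j with
        | zero =>
          intro _
          exact Or.inr ⟨Fin.elim0, Fin.elim0, fun i => i.elim0, fun i => i.elim0,
            fun i => i.elim0, fun i => i.elim0⟩
        | succ j ihj =>
          intro hjk
          rcases ihj (by omega) with hG' | ⟨x, U, hxU, hUA, hord, hR⟩
          · exact Or.inl hG'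
          · set Xj := Finset.image x Finset.univ with hXj
            have hXjcard : Xj.card ≤ j := by
              calc Xj.card ≤ (Finset.univ : Finset (Fin j)).card := Finset.card_image_le
              _ = j := by simp
            set Aj := A \ Xj with hAj
            have hAjcard : (k-1) * t' + 1 ≤ Aj.card := by
              have h1 : Aj.card + Xj.card = (A ∪ Xj).card := by
                rw [hAj]; exact Finset.card_sdiff_add_card A Xj
              have h2 : A.card ≤ (A ∪ Xj).card :=
                Finset.card_le_card Finset.subset_union_left
              have h3 : L'.length = t' := rfl
              have h4 := hA
              rw [List.length_cons, ← ht', hmul] at h4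
              omega
            rcases IH hGL' (fun f hf => hcards f (List.mem_cons_of_mem _ hf)) Aj
                hAjcard with ⟨S, hSA, hScard, hSred⟩ | ⟨ψ, hψinj, hψmem, hψblue⟩
            · exact Or.inl (Or.inl ⟨S, hSA.trans (Finset.sdiff_subset), hScard, hSred⟩)
            · set xnew := ψ w with hxnew
              set Unew := (lsup L').image ψ with hUnew
              have hxnewU : xnew ∈ Unew := Finset.mem_image_of_mem ψ hwL'
              have hUnewAj : Unew ⊆ Aj := by
                intro y hy
                obtain ⟨z, hz, hzy⟩ := Finset.mem_image.mp hy
                exact hzy ▸ hψmem z hz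
              have hUnewA : Unew ⊆ A := hUnewAj.trans Finset.sdiff_subset
              by_cases hB : ∃ B, B ⊆ A \ Unew ∧ B.card = r - 1 ∧
                  col (insert xnew B) = false
              · -- extend to a blue copy of e :: L'
                left
                right
                obtain ⟨B, hBsub, hBcard, hBblue⟩ := hB
                have herase : (e.erase w).card = r - 1 := by
                  rw [Finset.card_erase_of_mem hwe, hecard]
                have heB : (e.erase w).card = B.card := by rw [herase, hBcard]
                let η := Finset.equivOfCardEq heB
                set φ : W → Fin N :=
                  fun z => if h : z ∈ e.erase w then (η ⟨z, h⟩ : Fin N) else ψ z with hφ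
                have hF1 : ∀ z ∈ lsup L', z ∉ e.erase w := by
                  intro z hz hze
                  have : z ∈ e ∩ lsup L' :=
                    Finset.mem_inter.mpr ⟨Finset.mem_of_mem_erase hze, hz⟩
                  rw [hw, Finset.mem_singleton] at this
                  exact (Finset.ne_of_mem_erase hze) this
                have hF2 : ∀ z ∈ lsup L', φ z = ψ z := by
                  intro z hz; rw [hφ]; simp only; rw [dif_neg (hF1 z hz)]
                have hF3 : ∀ z (h : z ∈ e.erase w), φ z ∈ B := by
                  intro z h; rw [hφ]; simp only; rw [dif_pos h]; exact (η ⟨z, h⟩).2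
                have hsplit : ∀ z ∈ lsup (e :: L'), z ∈ e.erase w ∨ z ∈ lsup L' := by
                  intro z hz
                  rw [lsup_cons, Finset.mem_union] at hz
                  by_cases hzL : z ∈ lsup L'
                  · exact Or.inr hzL
                  · rcases hz with hze | hzL'
                    · by_cases hzw : z = w
                      · exact Or.inr (hzw ▸ hwL')
                      · exact Or.inl (Finset.mem_erase.mpr ⟨hzw, hze⟩)
                    · exact absurd hzL' hzL
                have hBdisj : ∀ y ∈ B, y ∉ Unew := by
                  intro y hy
                  exact (Finset.mem_sdiff.mp (hBsub hy)).2
                have hφψmem : ∀ z ∈ lsup L', φ z ∈ Unew := by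
                  intro z hz; rw [hF2 z hz]; exact Finset.mem_image_of_mem ψ hz
                have hinjerase : Set.InjOn φ ↑(e.erase w) := by
                  intro z₁ hz₁ z₂ hz₂ h12
                  have hz₁' : z₁ ∈ e.erase w := hz₁
                  have hz₂' : z₂ ∈ e.erase w := hz₂
                  rw [hφ] at h12; simp only at h12
                  rw [dif_pos hz₁', dif_pos hz₂'] at h12
                  exact congrArg Subtype.val (η.injective (Subtype.ext h12))
                refine ⟨φ, ?_, ?_, ?_⟩
                · intro z₁ hz₁ z₂ hz₂ h12
                  have hz₁' := hsplit z₁ (Finset.mem_coe.mp hz₁)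
                  have hz₂' := hsplit z₂ (Finset.mem_coe.mp hz₂)
                  rcases hz₁' with h1 | h1 <;> rcases hz₂' with h2 | h2
                  · exact hinjerase h1 h2 h12
                  · exact absurd (h12 ▸ hφψmem z₂ h2) (hBdisj _ (hF3 z₁ h1))
                  · exact absurd (h12 ▸ hφψmem z₁ h1) (fun hh => hBdisj _ (hF3 z₂ h2) hh)
                  · exact hψinj (Finset.mem_coe.mpr h1) (Finset.mem_coe.mpr h2)
                      (by rw [← hF2 z₁ h1, ← hF2 z₂ h2]; exact h12)
                · intro z hz
                  rcases hsplit z hz with h | h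
                  · exact (Finset.mem_sdiff.mp (hBsub (hF3 z h))).1
                  · rw [hF2 z h]
                    exact Finset.sdiff_subset (hψmem z h)
                · intro f hf
                  rcases List.mem_cons.mp hf with rfl | hf'
                  · have himg : f.image φ = insert xnew B := by
                      have hins : f = insert w (f.erase w) := (Finset.insert_erase hwe).symm
                      rw [hins, Finset.image_insert]
                      have hφw : φ w = xnew := by
                        rw [hφ]; simp only
                        rw [dif_neg (by simp)]
                      have himg2 : (f.erase w).image φ = B := by
                        apply Finset.eq_of_subset_of_card_le
                        · intro y hy
                          obtain ⟨z, hz, hzy⟩ := Finset.mem_image.mp hy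
                          exact hzy ▸ hF3 z hz
                        · rw [Finset.card_image_of_injOn hinjerase, herase, hBcard]
                      rw [hφw, himg2]
                    rw [himg, hBblue]
                  · have hfsub : f ⊆ lsup L' := subset_lsup hf'
                    have : f.image φ = f.image ψ :=
                      Finset.image_congr (fun z hz => hF2 z (hfsub hz))
                    rw [this]
                    exact hψblue f hf'
              · -- record the new pair
                right
                push_neg at hB
                have hRnew : ∀ B ⊆ A \ Unew, B.card = r - 1 →
                    col (insert xnew B) = true := by
                  intro B hBs hBc
                  have := hB B hBs hBc
                  revert this
                  cases col (insert xnew B) <;> simp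
                refine ⟨Fin.snoc x xnew, Fin.snoc U Unew, ?_, ?_, ?_, ?_⟩
                · intro i
                  rcases Fin.eq_castSucc_or_eq_last i with ⟨i', rfl⟩ | rfl
                  · simpa [Fin.snoc_castSucc] using hxU i'
                  · simpa [Fin.snoc_last] using hxnewU
                · intro i
                  rcases Fin.eq_castSucc_or_eq_last i with ⟨i', rfl⟩ | rfl
                  · simpa [Fin.snoc_castSucc] using hUA i'
                  · simpa [Fin.snoc_last] using hUnewA
                · intro i₁ i₂ h12
                  rcases Fin.eq_castSucc_or_eq_last i₂ with ⟨i₂', rfl⟩ | rfl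
                  · have hv1 : i₁.val < j := by
                      have hv2 : i₂'.val < j := i₂'.isLt
                      have h3 := Fin.lt_def.mp h12
                      simp only [Fin.coe_castSucc] at h3
                      omega
                    obtain ⟨i₁', rfl⟩ : ∃ i₁' : Fin j, i₁ = Fin.castSucc i₁' :=
                      ⟨⟨i₁.val, hv1⟩, Fin.ext (by simp)⟩
                    have hlt : i₁' < i₂' := by
                      rwa [Fin.castSucc_lt_castSucc_iff] at h12
                    simpa only [Fin.snoc_castSucc] using hord i₁' i₂' hlt
                  · have hv1 : i₁.val < j := by
                      have h3 := Fin.lt_def.mp h12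
                      simp only [Fin.val_last] at h3
                      omega
                    obtain ⟨i₁', rfl⟩ : ∃ i₁' : Fin j, i₁ = Fin.castSucc i₁' :=
                      ⟨⟨i₁.val, hv1⟩, Fin.ext (by simp)⟩
                    simp only [Fin.snoc_castSucc, Fin.snoc_last]
                    intro hmem
                    have hmem2 : x i₁' ∈ Aj := hUnewAj hmem
                    rw [hAj] at hmem2
                    exact (Finset.mem_sdiff.mp hmem2).2
                      (Finset.mem_image_of_mem x (Finset.mem_univ i₁'))
                · intro i
                  rcases Fin.eq_castSucc_or_eq_last i with ⟨i', rfl⟩ | rfl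
                  · simpa [Fin.snoc_castSucc] using hR i'
                  · simpa [Fin.snoc_last] using hRnew
      rcases build k (le_refl k) with hG' | ⟨x, U, hxU, hUA, hord, hR⟩
      · exact hG'
      · -- red clique from the x's
        left
        have hxinj : Function.Injective x := by
          intro i₁ i₂ h12
          by_contra hne
          rcases lt_or_gt_of_ne hne with hlt | hgt
          · exact hord i₁ i₂ hlt (h12 ▸ hxU i₂)
          · exact hord i₂ i₁ hgt (h12 ▸ hxU i₁)
        refine ⟨Finset.image x Finset.univ, ?_, ?_, ?_⟩
        · intro y hy
          obtain ⟨i, _, rfl⟩ := Finset.mem_image.mp hy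
          exact hUA i (hxU i)
        · rw [Finset.card_image_of_injective _ hxinj]; simp
        · intro c hcS hcr
          have hcne : c.Nonempty := by
            rw [← Finset.card_pos, hcr]; omega
          set J := Finset.univ.filter (fun i => x i ∈ c) with hJ
          have hJne : J.Nonempty := by
            obtain ⟨y, hy⟩ := hcne
            obtain ⟨i, _, rfl⟩ := Finset.mem_image.mp (hcS hy)
            exact ⟨i, Finset.mem_filter.mpr ⟨Finset.mem_univ i, hy⟩⟩
          set j' := J.max' hJne with hj'
          have hj'c : x j' ∈ c := (Finset.mem_filter.mp (J.max'_mem hJne)).2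
          set B := c.erase (x j') with hBdef
          have hBcard : B.card = r - 1 := by
            rw [hBdef, Finset.card_erase_of_mem hj'c, hcr]
          have hBsub : B ⊆ A \ U j' := by
            intro b hb
            have hbc : b ∈ c := Finset.mem_of_mem_erase hb
            obtain ⟨i, _, rfl⟩ := Finset.mem_image.mp (hcS hbc)
            have hiJ : i ∈ J := Finset.mem_filter.mpr ⟨Finset.mem_univ i, hbc⟩
            have hine : i ≠ j' := by
              intro h
              exact (Finset.ne_of_mem_erase hb) (by rw [h])
            have hilt : i < j' := lt_of_le_of_ne (Finset.le_max' J i hiJ) hine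
            exact Finset.mem_sdiff.mpr ⟨hUA i (hxU i), hord i j' hilt⟩
          have : c = insert (x j') B := (Finset.insert_erase hj'c).symm
          rw [this]
          exact hR j' B hBsub hBcard

end RamseyAux


open RamseyAux in
/-- If `r - 1` divides `k - 1`, then the `r`-uniform Ramsey number
`R(K_k^{(r)}, T)` equals `(k-1)t + 1` for every `r`-uniform hypertree `T` with `t`
edges: at `(k-1)t + 1` vertices every red-blue coloring (`true` = red) yields a red
`K_k^{(r)}` or a blue copy of `T`, and at `(k-1)t` vertices some coloring has neither. -/
theorem stmt16 (k r t : ℕ) (hk : 2 ≤ k) (hr : 2 ≤ r) (ht : 1 ≤ t)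
    (hdvd : (r - 1) ∣ (k - 1))
    {W : Type*} [Fintype W] [DecidableEq W] (T : FinHypergraph W)
    (hT : T.IsHypertree) (hu : T.Uniform r) (hte : T.edges.card = t) :
    (∀ col : Finset (Fin ((k - 1) * t + 1)) → Bool,
      (∃ S : Finset (Fin ((k - 1) * t + 1)), S.card = k ∧
          ∀ e ⊆ S, e.card = r → col e = true) ∨
      (∃ φ : W → Fin ((k - 1) * t + 1), Function.Injective φ ∧
          ∀ e ∈ T.edges, col (e.image φ) = false)) ∧
    (∃ col : Finset (Fin ((k - 1) * t)) → Bool,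
      (¬ ∃ S : Finset (Fin ((k - 1) * t)), S.card = k ∧
          ∀ e ⊆ S, e.card = r → col e = true) ∧
      ¬ ∃ φ : W → Fin ((k - 1) * t), Function.Injective φ ∧
          ∀ e ∈ T.edges, col (e.image φ) = false) := by
  obtain ⟨hconn, hlin, hnoberge⟩ := hT
  obtain ⟨L, hG, hLfin⟩ := exists_grows T ⟨hconn, hlin, hnoberge⟩ hr hu
  have hLlen : L.length = t := by
    rw [← hte, ← hLfin, List.toFinset_card_of_nodup hG.nodup]
  have hLT : ∀ f ∈ L, f ∈ T.edges := fun f hf => hLfin ▸ List.mem_toFinset.mpr hf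
  have hLr : ∀ f ∈ L, f.card = r := fun f hf => hu f (hLT f hf)
  have hedne : T.edges.Nonempty := by rw [← Finset.card_pos, hte]; omega
  have hcover : ∀ z : W, z ∈ lsup L := by
    intro z
    obtain ⟨e, he, hze⟩ := cover T hr hconn hu hedne z
    exact subset_lsup (List.mem_toFinset.mp (hLfin ▸ he)) hze
  constructor
  · -- upper bound
    intro col
    have hcard : (k-1) * L.length + 1 ≤ (Finset.univ : Finset (Fin ((k-1)*t+1))).card := by
      rw [hLlen, Finset.card_univ, Fintype.card_fin]
    rcases upper k r hk hr col L hG hLr Finset.univ hcard with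
      ⟨S, _, hScard, hSred⟩ | ⟨φ, hφinj, _, hφblue⟩
    · exact Or.inl ⟨S, hScard, hSred⟩
    · refine Or.inr ⟨φ, ?_, ?_⟩
      · intro a b hab
        exact hφinj (Finset.mem_coe.mpr (hcover a)) (Finset.mem_coe.mpr (hcover b)) hab
      · intro e he
        exact hφblue e (List.mem_toFinset.mp (hLfin ▸ he))
  · -- lower bound
    set m := (r - 1) * t with hm
    have hmpos : 0 < m := by
      have : 1 ≤ r - 1 := by omega
      have : 1 ≤ t := ht
      positivity
    set s := (k - 1) / (r - 1) with hs
    have hsm : s * (r - 1) = k - 1 := Nat.div_mul_cancel hdvd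
    have hkts : (k - 1) * t = s * m := by
      rw [hm, ← hsm]; ring
    set pfun : Fin ((k-1)*t) → ℕ := fun x => x.val / m with hpfun
    refine ⟨fun e => decide (2 ≤ (e.image pfun).card), ?_, ?_⟩
    · rintro ⟨S, hScard, hSred⟩
      have hfilter : ∀ p ∈ S.image pfun, (S.filter (fun a => pfun a = p)).card ≤ r - 1 := by
        intro p hp
        by_contra hge
        push_neg at hge
        have hrle : r ≤ (S.filter (fun a => pfun a = p)).card := by omega
        obtain ⟨c, hcsub, hccard⟩ := Finset.exists_subset_card_eq hrle
        have hcS : c ⊆ S := hcsub.trans (Finset.filter_subset _ _)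
        have hred := hSred c hcS hccard
        have h2 : 2 ≤ (c.image pfun).card := of_decide_eq_true hred
        have hsub : c.image pfun ⊆ {p} := by
          intro q hq
          obtain ⟨y, hy, rfl⟩ := Finset.mem_image.mp hq
          exact Finset.mem_singleton.mpr ((Finset.mem_filter.mp (hcsub hy)).2)
        have := Finset.card_le_card hsub
        rw [Finset.card_singleton] at this
        omega
      have h1 : S.card ≤ (r - 1) * (S.image pfun).card :=
        Finset.card_le_mul_card_image S (r - 1) hfilter
      have h2 : (S.image pfun) ⊆ Finset.range s := by
        intro q hq
        obtain ⟨y, _, rfl⟩ := Finset.mem_image.mp hq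
        rw [Finset.mem_range, hpfun]
        have hy : y.val < s * m := by
          have := y.isLt
          omega
        exact Nat.div_lt_of_lt_mul (by rw [Nat.mul_comm m s]; exact hy)
      have h3 : (S.image pfun).card ≤ s := by
        have := Finset.card_le_card h2
        simpa using this
      have : k ≤ (r-1) * s := by
        rw [← hScard]
        calc S.card ≤ (r-1) * (S.image pfun).card := h1
        _ ≤ (r-1) * s := Nat.mul_le_mul_left _ h3
      rw [mul_comm, hsm] at this
      omega
    · rintro ⟨φ, hφinj, hφblue⟩
      -- all vertices mapped into a single block
      have hconst : ∀ u v : W, T.adj u v → pfun (φ u) = pfun (φ v) := by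
        intro u v ⟨e, he, hue, hve⟩
        have hblue := hφblue e he
        have hle : ((e.image φ).image pfun).card ≤ 1 := by
          have := of_decide_eq_false hblue
          omega
        exact Finset.card_le_one.mp hle _
          (Finset.mem_image_of_mem pfun (Finset.mem_image_of_mem φ hue)) _
          (Finset.mem_image_of_mem pfun (Finset.mem_image_of_mem φ hve))
      have hwalk : ∀ u v : W, Relation.ReflTransGen T.adj u v →
          pfun (φ u) = pfun (φ v) := by
        intro u v h
        induction h with
        | refl => rfl
        | tail _ hadj ih => exact ih.trans (hconst _ _ hadj)
      -- support has (r-1)*t + 1 vertices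
      have hLne : L ≠ [] := by
        intro h
        rw [h] at hLlen
        simp at hLlen
        omega
      have hsupcard : (lsup L).card = (r - 1) * t + 1 := by
        rw [grows_card (by omega) hG hLr hLne, hLlen]
      obtain ⟨z₀, hz₀⟩ : (lsup L).Nonempty := by
        rw [← Finset.card_pos, hsupcard]; omega
      set p₀ := pfun (φ z₀) with hp₀
      set Part := Finset.univ.filter (fun x : Fin ((k-1)*t) => pfun x = p₀) with hPart
      have himg : (lsup L).image φ ⊆ Part := by
        intro y hy
        obtain ⟨z, hz, rfl⟩ := Finset.mem_image.mp hy
        rw [hPart, Finset.mem_filter]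
        exact ⟨Finset.mem_univ _, hwalk z z₀ (hconn z z₀) ▸ rfl⟩
      have hPartcard : Part.card ≤ m := by
        have : Part.card ≤ (Finset.range m).card := by
          apply Finset.card_le_card_of_injOn (fun x => x.val % m)
          · intro a _
            exact Finset.mem_range.mpr (Nat.mod_lt _ hmpos)
          · intro a haP b hbP hab
            have haP' : pfun a = p₀ := (Finset.mem_filter.mp haP).2
            have hbP' : pfun b = p₀ := (Finset.mem_filter.mp hbP).2
            have hdiv : a.val / m = b.val / m := by
              have h := haP'.trans hbP'.symm
              rw [hpfun] at h
              simpa using h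
            have hab' : a.val % m = b.val % m := by simpa using hab
            have ha2 : a.val = m * (a.val / m) + a.val % m := (Nat.div_add_mod _ _).symm
            have hb2 : b.val = m * (b.val / m) + b.val % m := (Nat.div_add_mod _ _).symm
            rw [hdiv] at ha2
            apply Fin.ext
            omega
        simpa using this
      have hcard2 : ((lsup L).image φ).card = (r - 1) * t + 1 := by
        rw [Finset.card_image_of_injective _ hφinj, hsupcard]
      have := Finset.card_le_card himg
      rw [hcard2] at this
      omega
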